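/- (Existence of the descent and s-closedness of the bottom) Let Ω^p (0 ≤ p ≤ n) carry anticommuting differentials s and d with H^p(d) = 0 for 0 < p < n, H⁰(d) = k, and assume no nonzero constant is s-exact (c = s ω⁰ with c ∈ k implies c = 0). Then every solution of s ω^m + d ω^{m−1} = 0 (with ω^{m−1} of form degree m−1 ≥ 0) gives rise to a chain of forms ω^p, p = m̲, …, m, for some 0 ≤ m̲ ≤ m, satisfying s ω^p + d ω^{p−1} = 0 for m̲ < p ≤ m and s ω^{m̲} = 0. -/
import Mathlib


/-- Existence of the descent and `s`-closedness of the bottom: in a complex of form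
degrees `0 ≤ p ≤ n` with anticommuting differentials `s`, `d`, with `H^p(d) = 0` for
`0 < p < n`, `H⁰(d) = K` (constants, embedded by `unit`), and no nonzero constant
`s`-exact, every solution of `s ω^m + d ω^{m−1} = 0` (written `m = t+1`) gives rise to a
chain of forms `ω^p`, `p = m̲, …, m` (for some `0 ≤ m̲ ≤ m`, with top the given data)
satisfying `s ω^p + d ω^{p−1} = 0` for `m̲ < p ≤ m` and `s ω^{m̲} = 0`. -/
theorem stmt_16 (K : Type*) [Field K] (n : ℕ)
    (Ω : ℕ → Type*) [∀ p, AddCommGroup (Ω p)] [∀ p, Module K (Ω p)]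
    (s : ∀ p, Ω p →ₗ[K] Ω p) (d : ∀ p, Ω p →ₗ[K] Ω (p + 1))
    (unit : K →ₗ[K] Ω 0)
    (hss : ∀ p (a : Ω p), s p (s p a) = 0)
    (hdd : ∀ p (a : Ω p), d (p + 1) (d p a) = 0)
    (hsd : ∀ p (a : Ω p), s (p + 1) (d p a) + d p (s p a) = 0)
    (hdpoin : ∀ p, p + 1 < n → ∀ a : Ω (p + 1), d (p + 1) a = 0 → ∃ b : Ω p, a = d p b)
    (hconst : ∀ a : Ω 0, d 0 a = 0 ↔ ∃ c : K, a = unit c)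
    (hnoconst : ∀ c : K, (∃ w : Ω 0, unit c = s 0 w) → c = 0) :
    ∀ t : ℕ, t + 1 ≤ n → ∀ (ωtop : Ω (t + 1)) (ω' : Ω t),
      s (t + 1) ωtop + d t ω' = 0 →
      ∃ (mb : ℕ) (chain : ∀ p, Ω p), mb ≤ t + 1 ∧
        chain (t + 1) = ωtop ∧ chain t = ω' ∧
        (∀ p, mb ≤ p → p < t + 1 → s (p + 1) (chain (p + 1)) + d p (chain p) = 0) ∧
        s mb (chain mb) = 0 := by
  intro t
  induction t with
  | zero =>
    intro _ ωtop ω' heq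
    -- derive d (s 0 ω') = 0
    have h1 : s 1 (d 0 ω') = 0 := by
      have := congrArg (s 1) heq
      rw [map_add, hss, zero_add, map_zero] at this
      exact this
    have h2 : d 0 (s 0 ω') = 0 := by
      simpa [h1] using hsd 0 ω'
    obtain ⟨c, hc⟩ := (hconst (s 0 ω')).mp h2
    have hc0 : c = 0 := hnoconst c ⟨ω', hc.symm⟩
    have hs0 : s 0 ω' = 0 := by rw [hc, hc0, map_zero]
    refine ⟨0, fun p => match p with | 0 => ω' | 1 => ωtop | (k+2) => 0,
      by omega, rfl, rfl, ?_, hs0⟩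
    intro p _ hp
    interval_cases p
    exact heq
  | succ t ih =>
    intro hn ωtop ω' heq
    have h1 : s (t + 2) (d (t + 1) ω') = 0 := by
      have := congrArg (s (t + 2)) heq
      rw [map_add, hss, zero_add, map_zero] at this
      exact this
    have h2 : d (t + 1) (s (t + 1) ω') = 0 := by
      simpa [h1] using hsd (t + 1) ω'
    obtain ⟨b, hb⟩ := hdpoin t (by omega) (s (t + 1) ω') h2
    have heq' : s (t + 1) ω' + d t (-b) = 0 := by
      rw [map_neg, hb]; abel
    obtain ⟨mb, chain', hmb, htop, hbot, hmid, hs0⟩ := ih (by omega) ω' (-b) heq'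
    refine ⟨mb, Function.update chain' (t + 2) ωtop, by omega,
      Function.update_self _ _ _, ?_, ?_, ?_⟩
    · rw [Function.update_of_ne (by omega), htop]
    · intro p hpl hpu
      by_cases hpt : p = t + 1
      · subst hpt
        rw [Function.update_self, Function.update_of_ne (by omega), htop]
        exact heq
      · rw [Function.update_of_ne (by omega), Function.update_of_ne (by omega)]
        exact hmid p hpl (by omega)
    · rw [Function.update_of_ne (by omega)]
      exact hs0
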